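/- Let q be a real number with q ≥ 3, let t ≥ t₃(q), and let z satisfy z_c^−(t,q) < z < z_c^+(t,q). Then the second iterate R²_{z,t,q} has exactly three real fixed points, each lying in (0,∞). One of them, w₃, is a repelling fixed point of the first iterate R_{z,t,q} (R_{z,t,q}(w₃) = w₃ and |R'_{z,t,q}(w₃)| > 1). The other two, w₁ and w₂, form an attracting period-2 cycle of R_{z,t,q}: R_{z,t,q}(w₁) = w₂, R_{z,t,q}(w₂) = w₁, and |(R²_{z,t,q})'(w₁)| < 1. -/

import Mathlib

noncomputable section

/-- The renormalization map `R_{z,t,q}(w) = z·((t + w + (q−2)tw)/(1 + (q−1)tw))²`,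
viewed as a function of the real variable `w`. -/
def Rmap (z t q : ℝ) (w : ℝ) : ℝ :=
  z * ((t + w + (q - 2) * t * w) / (1 + (q - 1) * t * w)) ^ 2

/-- The second iterate `R²_{z,t,q}(w) = R_{z,t,q}(R_{z,t,q}(w))`. -/
def Rmap2 (z t q : ℝ) (w : ℝ) : ℝ := Rmap z t q (Rmap z t q w)

/-- `t₃(q) = 3(3q − 6 + √(9q² − 32q + 32))/(2(q − 1))`. -/
def tThree (q : ℝ) : ℝ :=
  3 * (3 * q - 6 + Real.sqrt (9 * q ^ 2 - 32 * q + 32)) / (2 * (q - 1))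

/-- `z_c^+(t,q)`. -/
def zcPlus (q t : ℝ) : ℝ :=
  ((-3 - 6 * (q - 2) * t - 3 * (2 + (q - 2) * q) * t ^ 2 - 6 * (q - 2) * (q - 1) * t ^ 3
      + (q - 1) ^ 2 * t ^ 4)
    + Real.sqrt ((t - 1) ^ 3 * (1 - t + q * t) ^ 3 * (-9 + 18 * t - 9 * q * t - t ^ 2 + q * t ^ 2)))
    / (8 * t * (1 - 2 * t + q * t) ^ 3)

/-- `z_c^−(t,q)`. -/
def zcMinus (q t : ℝ) : ℝ :=
  ((-3 - 6 * (q - 2) * t - 3 * (2 + (q - 2) * q) * t ^ 2 - 6 * (q - 2) * (q - 1) * t ^ 3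
      + (q - 1) ^ 2 * t ^ 4)
    - Real.sqrt ((t - 1) ^ 3 * (1 - t + q * t) ^ 3 * (-9 + 18 * t - 9 * q * t - t ^ 2 + q * t ^ 2)))
    / (8 * t * (1 - 2 * t + q * t) ^ 3)

private lemma cancel_factor {a x y : ℝ} (ha : a ≠ 0) (h : a * (x - y) = 0) : x = y := by
  rcases mul_eq_zero.mp h with h' | h'
  · exact absurd h' ha
  · linarith

private lemma rmap_BM (z t q B M : ℝ) (hB : B = (q - 1) * t) (hM : M = 1 + (q - 2) * t)
    (w : ℝ) : Rmap z t q w = z * ((t + M * w) / (1 + B * w)) ^ 2 := by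
  have h1 : t + w + (q - 2) * t * w = t + M * w := by rw [hM]; ring
  have h2 : 1 + (q - 1) * t * w = 1 + B * w := by rw [hB]
  rw [Rmap, h1, h2]

private lemma rmap_hasDerivAt (z t q B M : ℝ) (hB : B = (q - 1) * t)
    (hM : M = 1 + (q - 2) * t) (x : ℝ) (hD : 1 + B * x ≠ 0) :
    HasDerivAt (Rmap z t q) (2 * z * (M - B * t) * (t + M * x) / (1 + B * x) ^ 3) x := by
  have hnum : HasDerivAt (fun w : ℝ => t + M * w) M x := by
    simpa using ((hasDerivAt_id x).const_mul M).const_add t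
  have hden : HasDerivAt (fun w : ℝ => 1 + B * w) B x := by
    simpa using ((hasDerivAt_id x).const_mul B).const_add 1
  have hdiv := hnum.div hden hD
  have hfun : Rmap z t q = fun w => z * ((t + M * w) / (1 + B * w)) ^ 2 :=
    funext (rmap_BM z t q B M hB hM)
  rw [hfun]
  have h2 := (hdiv.pow 2).const_mul z
  refine h2.congr_deriv ?_
  simp only [Pi.div_apply, Nat.reduceSub, pow_one, Nat.cast_ofNat]
  field_simp
  ring

set_option maxHeartbeats 2000000 in
/-- **Lemma (region 𝓡₂: attracting two-cycle).**
Let `q ≥ 3` be real, `t ≥ t₃(q)`, and `z_c^−(t,q) < z < z_c^+(t,q)`.  Then the second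
iterate `R²_{z,t,q}` has exactly three real fixed points, all in `(0,∞)`: one, `w₃`,
is a repelling fixed point of `R_{z,t,q}`, and the other two, `w₁` and `w₂`, form an
attracting period-2 cycle of `R_{z,t,q}`. -/
theorem region_two_attracting_two_cycle
    (q : ℝ) (hq : 3 ≤ q) (t : ℝ) (ht : tThree q ≤ t) (z : ℝ)
    (hz1 : zcMinus q t < z) (hz2 : z < zcPlus q t) :
    ∃ w₁ w₂ w₃ : ℝ, 0 < w₁ ∧ 0 < w₂ ∧ 0 < w₃ ∧
      w₁ ≠ w₂ ∧ w₁ ≠ w₃ ∧ w₂ ≠ w₃ ∧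
      Rmap2 z t q w₁ = w₁ ∧ Rmap2 z t q w₂ = w₂ ∧ Rmap2 z t q w₃ = w₃ ∧
      (∀ w : ℝ, Rmap2 z t q w = w → w = w₁ ∨ w = w₂ ∨ w = w₃) ∧
      Rmap z t q w₃ = w₃ ∧ 1 < |deriv (Rmap z t q) w₃| ∧
      Rmap z t q w₁ = w₂ ∧ Rmap z t q w₂ = w₁ ∧
      |deriv (Rmap2 z t q) w₁| < 1 := by
  ----------------------------------------------------------------
  -- Basic facts about q, t and the abbreviations B, M
  ----------------------------------------------------------------
  obtain ⟨B, hBdef⟩ : ∃ x : ℝ, x = (q - 1) * t := ⟨_, rfl⟩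
  obtain ⟨M, hMdef⟩ : ∃ x : ℝ, x = 1 + (q - 2) * t := ⟨_, rfl⟩
  obtain ⟨σ, hσdef⟩ : ∃ x : ℝ, x = Real.sqrt (9 * q ^ 2 - 32 * q + 32) := ⟨_, rfl⟩
  have hσarg : (0:ℝ) ≤ 9 * q ^ 2 - 32 * q + 32 := by nlinarith [sq_nonneg (q - 2)]
  have hσsq : σ ^ 2 = 9 * q ^ 2 - 32 * q + 32 := by rw [hσdef]; exact Real.sq_sqrt hσarg
  have hσ0 : 0 ≤ σ := by rw [hσdef]; exact Real.sqrt_nonneg _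
  have hq1 : (0:ℝ) < q - 1 := by linarith
  have hTc : 2 * (q - 1) * tThree q = 3 * (3 * q - 6) + 3 * σ := by
    rw [tThree, hσdef]
    field_simp
  have hineq : 3 * σ ≤ 2 * (q - 1) * t - 9 * (q - 2) := by
    have h := mul_le_mul_of_nonneg_left ht (by linarith : (0:ℝ) ≤ 2 * (q - 1))
    rw [hTc] at h
    linarith
  have ht0 : 0 < t := by nlinarith
  have hM0 : 0 < M := by rw [hMdef]; nlinarith
  have hM1 : 1 + t ≤ M := by rw [hMdef]; nlinarith
  have hB0 : 0 < B := by rw [hBdef]; nlinarith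
  have hbt9m : 9 * M ≤ B * t := by
    rw [hBdef, hMdef]
    nlinarith [hσsq, hσ0, hineq, sq_nonneg (2 * (q - 1) * t - 9 * (q - 2))]
  have hc0 : 0 < B * t - M := by linarith
  ----------------------------------------------------------------
  -- The radical ρ and the constant K
  ----------------------------------------------------------------
  obtain ⟨ρ, hρdef⟩ : ∃ x : ℝ, x = Real.sqrt ((B * t - M) * (B * t - 9 * M)) := ⟨_, rfl⟩
  have hrargs : (0:ℝ) ≤ (B * t - M) * (B * t - 9 * M) :=
    mul_nonneg (by linarith) (by linarith)
  have hrsq : ρ ^ 2 = (B * t - M) * (B * t - 9 * M) := by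
    rw [hρdef]; exact Real.sq_sqrt hrargs
  have hρ0 : 0 ≤ ρ := by rw [hρdef]; exact Real.sqrt_nonneg _
  obtain ⟨K, hKdef⟩ : ∃ x : ℝ, x = (B * t - M) ^ 2 - 4 * M ^ 2 - 4 * B * t * M := ⟨_, rfl⟩
  have hK0 : 0 < K := by
    rw [hKdef]
    nlinarith [mul_nonneg (mul_pos hB0 ht0).le (by linarith : (0:ℝ) ≤ B * t - 9 * M),
      mul_pos hM0 hc0]
  have h64 : K ^ 2 - ((B * t - M) * ρ) ^ 2 = 64 * B * t * M ^ 3 := by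
    rw [hKdef]; linear_combination (-1 * M ^ 2 + 2 * B * M * t - 1 * B ^ 2 * t ^ 2) * hrsq
  have hKρ : (B * t - M) * ρ < K := by
    have h1 : ((B * t - M) * ρ) ^ 2 < K ^ 2 := by
      linarith [mul_pos (mul_pos hB0 ht0) (pow_pos hM0 3)]
    exact lt_of_pow_lt_pow_left₀ 2 hK0.le h1
  ----------------------------------------------------------------
  -- Rewriting z_c^± in terms of K and ρ
  ----------------------------------------------------------------
  have hd8 : (0:ℝ) < 8 * t * M ^ 3 := by nlinarith [mul_pos ht0 (pow_pos hM0 3)]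
  have hsqrtarg : (t - 1) ^ 3 * (1 - t + q * t) ^ 3 *
      (-9 + 18 * t - 9 * q * t - t ^ 2 + q * t ^ 2) = ((B * t - M) * ρ) ^ 2 := by
    rw [mul_pow, hrsq, hBdef, hMdef]; ring
  have hsqrteq : Real.sqrt ((t - 1) ^ 3 * (1 - t + q * t) ^ 3 *
      (-9 + 18 * t - 9 * q * t - t ^ 2 + q * t ^ 2)) = (B * t - M) * ρ := by
    rw [hsqrtarg, Real.sqrt_sq (mul_nonneg hc0.le hρ0)]
  have hzm : zcMinus q t = (K - (B * t - M) * ρ) / (8 * t * M ^ 3) := by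
    rw [zcMinus, hsqrteq, hKdef, hBdef, hMdef]; ring
  have hzp : zcPlus q t = (K + (B * t - M) * ρ) / (8 * t * M ^ 3) := by
    rw [zcPlus, hsqrteq, hKdef, hBdef, hMdef]; ring
  rw [hzm] at hz1
  rw [hzp] at hz2
  have hz1' : K - (B * t - M) * ρ < z * (8 * t * M ^ 3) := (div_lt_iff₀ hd8).mp hz1
  have hz2' : z * (8 * t * M ^ 3) < K + (B * t - M) * ρ := (lt_div_iff₀ hd8).mp hz2
  have hz0 : 0 < z := by
    by_contra hcon
    push_neg at hcon
    have h3 : z * (8 * t * M ^ 3) ≤ 0 := mul_nonpos_iff.mpr (Or.inr ⟨hcon, hd8.le⟩)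
    linarith
  ----------------------------------------------------------------
  -- P, Qq and the positivity of the discriminant
  ----------------------------------------------------------------
  obtain ⟨P, hPdef⟩ : ∃ x : ℝ, x = B + z * M ^ 2 := ⟨_, rfl⟩
  obtain ⟨Qq, hQdef⟩ : ∃ x : ℝ, x = 1 + z * t * M := ⟨_, rfl⟩
  have hP0 : 0 < P := by
    rw [hPdef]; linarith [mul_pos hz0 (pow_pos hM0 2)]
  have hQ0 : 0 < Qq := by
    rw [hQdef]; linarith [mul_pos (mul_pos hz0 ht0) hM0]
  have hPne : P ≠ 0 := hP0.ne'
  have hsqlt : (z * (8 * t * M ^ 3) - K) ^ 2 < ((B * t - M) * ρ) ^ 2 :=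
    sq_lt_sq' (by linarith) (by linarith)
  have hiden : 16 * t * M ^ 3 * (z * (B * t - M) ^ 2 - 4 * P * Qq) =
      ((B * t - M) * ρ) ^ 2 - (z * (8 * t * M ^ 3) - K) ^ 2 := by
    rw [hPdef, hQdef, hKdef]
    linear_combination (-1 * M ^ 2 + 2 * B * M * t - 1 * B ^ 2 * t ^ 2) * hrsq
  have hE : 4 * P * Qq < z * (B * t - M) ^ 2 := by
    have h1 : 0 < 16 * t * M ^ 3 * (z * (B * t - M) ^ 2 - 4 * P * Qq) := by
      rw [hiden]; linarith [hsqlt]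
    by_contra hcon
    push_neg at hcon
    have h16 : (0:ℝ) < 16 * t * M ^ 3 := by linarith [mul_pos ht0 (pow_pos hM0 3)]
    have h3 : 16 * t * M ^ 3 * (z * (B * t - M) ^ 2 - 4 * P * Qq) ≤ 0 :=
      mul_nonpos_iff.mpr (Or.inl ⟨h16.le, sub_nonpos.mpr hcon⟩)
    linarith [h1, h3]
  have hEpos : 0 < z * (B * t - M) ^ 2 - 4 * P * Qq := by
    linarith [hE]
  have hdarg : (0:ℝ) ≤ z * (B * t - M) ^ 2 * (z * (B * t - M) ^ 2 - 4 * P * Qq) :=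
    (mul_pos (mul_pos hz0 (pow_pos hc0 2)) hEpos).le
  obtain ⟨δ, hδdef⟩ : ∃ x : ℝ,
      x = Real.sqrt (z * (B * t - M) ^ 2 * (z * (B * t - M) ^ 2 - 4 * P * Qq)) := ⟨_, rfl⟩
  have hdsq : δ ^ 2 = z * (B * t - M) ^ 2 * (z * (B * t - M) ^ 2 - 4 * P * Qq) := by
    rw [hδdef]; exact Real.sq_sqrt hdarg
  have hδ0 : 0 < δ := by
    rw [hδdef]
    exact Real.sqrt_pos.mpr (mul_pos (mul_pos hz0 (pow_pos hc0 2)) hEpos)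
  ----------------------------------------------------------------
  -- The two-cycle points w₁ < w₂
  ----------------------------------------------------------------
  have h2P2 : (0:ℝ) < 2 * P ^ 2 := by linarith [pow_pos hP0 2]
  have hP4 : (0:ℝ) < 4 * P ^ 4 := by linarith [pow_pos hP0 4]
  obtain ⟨w₁, hw1def⟩ : ∃ x : ℝ,
      x = (z * (B * t - M) ^ 2 - 2 * P * Qq - δ) / (2 * P ^ 2) := ⟨_, rfl⟩
  obtain ⟨w₂, hw2def⟩ : ∃ x : ℝ,
      x = (z * (B * t - M) ^ 2 - 2 * P * Qq + δ) / (2 * P ^ 2) := ⟨_, rfl⟩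
  have hw1c : 2 * P ^ 2 * w₁ = z * (B * t - M) ^ 2 - 2 * P * Qq - δ := by
    rw [hw1def]; field_simp
  have hw2c : 2 * P ^ 2 * w₂ = z * (B * t - M) ^ 2 - 2 * P * Qq + δ := by
    rw [hw2def]; field_simp
  have hgap : δ < z * (B * t - M) ^ 2 - 2 * P * Qq := by
    have hid : (z * (B * t - M) ^ 2 - 2 * P * Qq) ^ 2 - δ ^ 2 = 4 * P ^ 2 * Qq ^ 2 := by
      rw [hdsq]; ring
    have hSpos : 0 < z * (B * t - M) ^ 2 - 2 * P * Qq := by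
      linarith [mul_pos hP0 hQ0]
    have h1 : δ ^ 2 < (z * (B * t - M) ^ 2 - 2 * P * Qq) ^ 2 := by
      linarith [mul_pos (pow_pos hP0 2) (pow_pos hQ0 2)]
    exact lt_of_pow_lt_pow_left₀ 2 hSpos.le h1
  have hw10 : 0 < w₁ := by
    rw [hw1def]; exact div_pos (by linarith) h2P2
  have hw20 : 0 < w₂ := by
    rw [hw2def]; exact div_pos (by linarith) h2P2
  have hw12 : w₁ < w₂ := by
    rw [hw1def, hw2def]; exact div_lt_div_of_pos_right (by linarith) h2P2
  have hne12 : w₁ ≠ w₂ := ne_of_lt hw12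
  ----------------------------------------------------------------
  -- Quadratic-root identities for w₁, w₂
  ----------------------------------------------------------------
  have hq1r : (P * w₁ + Qq) ^ 2 = z * (B * t - M) ^ 2 * w₁ := by
    apply cancel_factor (a := 4 * P ^ 4) hP4.ne'
    linear_combination ((-1) * P ^ 2 * δ + 2 * P ^ 3 * Qq + 2 * P ^ 4 * w₁
      + (-1) * M ^ 2 * z * P ^ 2 + 2 * B * M * t * z * P ^ 2
      + (-1) * B ^ 2 * t ^ 2 * z * P ^ 2) * hw1c + P ^ 2 * hdsq
  have hq2r : (P * w₂ + Qq) ^ 2 = z * (B * t - M) ^ 2 * w₂ := by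
    apply cancel_factor (a := 4 * P ^ 4) hP4.ne'
    linear_combination (P ^ 2 * δ + 2 * P ^ 3 * Qq + 2 * P ^ 4 * w₂
      + (-1) * M ^ 2 * z * P ^ 2 + 2 * B * M * t * z * P ^ 2
      + (-1) * B ^ 2 * t ^ 2 * z * P ^ 2) * hw2c + P ^ 2 * hdsq
  have hfacu : ∀ u : ℝ, (P * u + Qq) ^ 2 - z * (B * t - M) ^ 2 * u
      = P ^ 2 * (u - w₁) * (u - w₂) := by
    intro u
    apply cancel_factor (a := 4 * P ^ 4) hP4.ne'
    linear_combination (2 * P ^ 4 * u + (-2) * P ^ 4 * w₂) * hw1c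
      + (P ^ 2 * δ + 2 * P ^ 3 * Qq + 2 * P ^ 4 * u + (-1) * M ^ 2 * z * P ^ 2
        + 2 * B * M * t * z * P ^ 2 + (-1) * B ^ 2 * t ^ 2 * z * P ^ 2) * hw2c
      + P ^ 2 * hdsq
  ----------------------------------------------------------------
  -- The map in B,M form; positivity and strict decrease on [0,∞)
  ----------------------------------------------------------------
  have hRd : ∀ w : ℝ, Rmap z t q w = z * ((t + M * w) / (1 + B * w)) ^ 2 :=
    rmap_BM z t q B M hBdef hMdef
  have hDpos : ∀ w : ℝ, 0 ≤ w → 0 < 1 + B * w := by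
    intro w hw; linarith [mul_nonneg hB0.le hw]
  have hNpos : ∀ w : ℝ, 0 ≤ w → 0 < t + M * w := by
    intro w hw; linarith [mul_nonneg hM0.le hw]
  have hRpos : ∀ w : ℝ, 0 ≤ w → 0 < Rmap z t q w := by
    intro w hw
    rw [hRd w]
    exact mul_pos hz0 (pow_pos (div_pos (hNpos w hw) (hDpos w hw)) 2)
  have hanti : ∀ u v : ℝ, 0 ≤ u → u < v → Rmap z t q v < Rmap z t q u := by
    intro u v hu huv
    have hv : 0 ≤ v := le_trans hu huv.le
    rw [hRd u, hRd v]
    have hDu := hDpos u hu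
    have hDv := hDpos v hv
    have hNv := hNpos v hv
    have hlt : (t + M * v) / (1 + B * v) < (t + M * u) / (1 + B * u) := by
      rw [div_lt_div_iff₀ hDv hDu]
      linarith [mul_pos (sub_pos.mpr huv) hc0]
    have hnn : 0 ≤ (t + M * v) / (1 + B * v) := (div_pos hNv hDv).le
    exact mul_lt_mul_of_pos_left (pow_lt_pow_left₀ hlt hnn two_ne_zero) hz0
  ----------------------------------------------------------------
  -- The fixed point w₃ of Rmap
  ----------------------------------------------------------------
  have hL : Rmap z t q 0 = z * t ^ 2 := by rw [hRd 0]; norm_num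
  have hL0 : 0 < z * t ^ 2 := mul_pos hz0 (pow_pos ht0 2)
  have hRLlt : Rmap z t q (z * t ^ 2) < z * t ^ 2 := by
    have h := hanti 0 (z * t ^ 2) le_rfl hL0
    rw [hL] at h
    exact h
  have hcont : ContinuousOn (fun w => Rmap z t q w - w) (Set.Icc 0 (z * t ^ 2)) := by
    have hf : ContinuousOn (fun w : ℝ => z * ((t + M * w) / (1 + B * w)) ^ 2 - w)
        (Set.Icc 0 (z * t ^ 2)) := by
      apply ContinuousOn.sub _ continuousOn_id
      apply ContinuousOn.mul continuousOn_const
      apply ContinuousOn.pow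
      apply ContinuousOn.div (by fun_prop) (by fun_prop)
      intro x hx
      exact (hDpos x hx.1).ne'
    exact hf.congr fun x _ => by simp only [hRd]
  have hivt := intermediate_value_Icc' hL0.le hcont
  have hmem : (0:ℝ) ∈ Set.Icc (Rmap z t q (z * t ^ 2) - z * t ^ 2) (Rmap z t q 0 - 0) :=
    Set.mem_Icc.mpr ⟨by linarith, by rw [hL]; linarith⟩
  obtain ⟨w₃, hw3mem, hw3z⟩ := hivt hmem
  have hfix3 : Rmap z t q w₃ = w₃ := by
    have h : Rmap z t q w₃ - w₃ = 0 := hw3z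
    linarith
  have hw30 : 0 < w₃ := by
    have h := hRpos w₃ hw3mem.1
    rw [hfix3] at h
    exact h
  have huniq : ∀ p : ℝ, 0 < p → Rmap z t q p = p → p = w₃ := by
    intro p hp hfp
    rcases lt_trichotomy p w₃ with h | h | h
    · exfalso
      have h2 := hanti p w₃ hp.le h
      rw [hfp, hfix3] at h2
      linarith
    · exact h
    · exfalso
      have h2 := hanti w₃ p hw30.le h
      rw [hfp, hfix3] at h2
      linarith
  ----------------------------------------------------------------
  -- The algebraic bridge between Rmap2 fixed points and the quintic
  ----------------------------------------------------------------
  have hbridge : ∀ w : ℝ, 0 < w → (Rmap2 z t q w = w ↔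
      (w * (1 + B * w) ^ 2 - z * (t + M * w) ^ 2) *
        ((P * w + Qq) ^ 2 - z * (B * t - M) ^ 2 * w) = 0) := by
    intro w hw
    have hD := hDpos w hw.le
    have hDD : 0 < (1 + B * w) ^ 2 + B * z * (t + M * w) ^ 2 := by
      have h1 : 0 ≤ B * z * (t + M * w) ^ 2 :=
        mul_nonneg (mul_nonneg hB0.le hz0.le) (sq_nonneg _)
      linarith [pow_pos hD 2]
    have hX : 0 ≤ z * ((t + M * w) / (1 + B * w)) ^ 2 := mul_nonneg hz0.le (sq_nonneg _)
    have hDX := hDpos _ hX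
    have hval : Rmap2 z t q w = z * ((t * (1 + B * w) ^ 2 + M * z * (t + M * w) ^ 2) /
        ((1 + B * w) ^ 2 + B * z * (t + M * w) ^ 2)) ^ 2 := by
      have h1 : Rmap2 z t q w = Rmap z t q (Rmap z t q w) := rfl
      rw [h1, hRd w, hRd (z * ((t + M * w) / (1 + B * w)) ^ 2)]
      have h2 : (t + M * (z * ((t + M * w) / (1 + B * w)) ^ 2)) /
          (1 + B * (z * ((t + M * w) / (1 + B * w)) ^ 2)) =
          (t * (1 + B * w) ^ 2 + M * z * (t + M * w) ^ 2) /
          ((1 + B * w) ^ 2 + B * z * (t + M * w) ^ 2) := by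
        rw [div_eq_div_iff hDX.ne' hDD.ne']
        field_simp
      rw [h2]
    have hiden2 : w * ((1 + B * w) ^ 2 + B * z * (t + M * w) ^ 2) ^ 2 -
        z * (t * (1 + B * w) ^ 2 + M * z * (t + M * w) ^ 2) ^ 2 =
        (w * (1 + B * w) ^ 2 - z * (t + M * w) ^ 2) *
          ((P * w + Qq) ^ 2 - z * (B * t - M) ^ 2 * w) := by
      linear_combination ((-2) * Qq * w ^ 2 + (-1) * P * w ^ 3 + 2 * t ^ 2 * z * Qq * w
        + t ^ 2 * z * P * w ^ 2 + 4 * M * t * z * Qq * w ^ 2 + 2 * M * t * z * P * w ^ 3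
        + (-1) * M ^ 2 * z * w ^ 3 + 2 * M ^ 2 * z * Qq * w ^ 3 + M ^ 2 * z * P * w ^ 4
        + M ^ 2 * t ^ 2 * z ^ 2 * w ^ 2 + 2 * M ^ 3 * t * z ^ 2 * w ^ 3
        + M ^ 4 * z ^ 2 * w ^ 4 + (-1) * B * w ^ 3 + (-4) * B * Qq * w ^ 3
        + (-2) * B * P * w ^ 4 + B * t ^ 2 * z * w ^ 2 + 2 * B * M * t * z * w ^ 3
        + (-1) * B * M ^ 2 * z * w ^ 4 + (-2) * B ^ 2 * w ^ 4 + (-2) * B ^ 2 * Qq * w ^ 4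
        + (-1) * B ^ 2 * P * w ^ 5 + (-1) * B ^ 2 * M ^ 2 * z * w ^ 5
        + (-1) * B ^ 3 * w ^ 5) * hPdef
      + ((-1) * w + (-1) * Qq * w + t ^ 2 * z + t ^ 2 * z * Qq + M * t * z * w
        + 2 * M * t * z * Qq * w + M * t ^ 3 * z ^ 2 + (-1) * M ^ 2 * z * w ^ 2
        + M ^ 2 * z * Qq * w ^ 2 + 4 * M ^ 2 * t ^ 2 * z ^ 2 * w
        + 5 * M ^ 3 * t * z ^ 2 * w ^ 2 + 2 * M ^ 4 * z ^ 2 * w ^ 3 + (-4) * B * w ^ 2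
        + (-2) * B * Qq * w ^ 2 + 2 * B * t ^ 2 * z * w + 2 * B * M * t * z * w ^ 2
        + (-2) * B * M ^ 2 * z * w ^ 3 + (-5) * B ^ 2 * w ^ 3 + (-1) * B ^ 2 * Qq * w ^ 3
        + (-1) * B ^ 2 * M * t * z * w ^ 3 + (-2) * B ^ 2 * M ^ 2 * z * w ^ 4
        + (-2) * B ^ 3 * w ^ 4) * hQdef
    rw [hval, div_pow, ← mul_div_assoc]
    constructor
    · intro h
      have h2 : z * (t * (1 + B * w) ^ 2 + M * z * (t + M * w) ^ 2) ^ 2 =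
          w * ((1 + B * w) ^ 2 + B * z * (t + M * w) ^ 2) ^ 2 :=
        (div_eq_iff (pow_ne_zero 2 hDD.ne')).mp h
      linarith [hiden2]
    · intro h
      rw [div_eq_iff (pow_ne_zero 2 hDD.ne')]
      linarith [hiden2]
  ----------------------------------------------------------------
  -- Rmap2 fixes w₁, w₂, w₃
  ----------------------------------------------------------------
  have hfix2w1 : Rmap2 z t q w₁ = w₁ := by
    rw [hbridge w₁ hw10]
    apply mul_eq_zero_of_right
    linarith [hq1r]
  have hfix2w2 : Rmap2 z t q w₂ = w₂ := by
    rw [hbridge w₂ hw20]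
    apply mul_eq_zero_of_right
    linarith [hq2r]
  have hfix2w3 : Rmap2 z t q w₃ = w₃ := by
    show Rmap z t q (Rmap z t q w₃) = w₃
    rw [hfix3, hfix3]
  ----------------------------------------------------------------
  -- Classification of all fixed points of Rmap2
  ----------------------------------------------------------------
  have hclass : ∀ w : ℝ, Rmap2 z t q w = w → w = w₁ ∨ w = w₂ ∨ w = w₃ := by
    intro w heq
    by_cases hDw : 1 + B * w = 0
    · exfalso
      have hRw : Rmap z t q w = 0 := by rw [hRd w, hDw]; simp
      have hw : w = z * t ^ 2 := by
        rw [← heq]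
        show Rmap z t q (Rmap z t q w) = z * t ^ 2
        rw [hRw, hL]
      rw [hw] at hDw
      linarith [mul_pos hB0 hL0]
    · have hw0 : 0 < w := by
        have h1 : 0 ≤ Rmap z t q w := by
          rw [hRd w]; exact mul_nonneg hz0.le (sq_nonneg _)
        have h2 : 0 < Rmap2 z t q w := hRpos _ h1
        rw [heq] at h2
        exact h2
      have hprod0 := (hbridge w hw0).mp heq
      rcases mul_eq_zero.mp hprod0 with h3 | h4
      · right; right
        apply huniq w hw0
        have hD := hDpos w hw0.le
        rw [hRd w, div_pow, ← mul_div_assoc, div_eq_iff (pow_ne_zero 2 hD.ne')]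
        linarith
      · rw [hfacu w] at h4
        rcases mul_eq_zero.mp h4 with h5 | h6
        · rcases mul_eq_zero.mp h5 with h7 | h8
          · exact absurd h7 (pow_ne_zero 2 hPne)
          · left; linarith
        · right; left; linarith
  ----------------------------------------------------------------
  -- w₁, w₂ are not fixed by Rmap; they are swapped
  ----------------------------------------------------------------
  have hnfix1 : Rmap z t q w₁ ≠ w₁ := by
    intro hfx
    have hw1w3 : w₁ = w₃ := huniq w₁ hw10 hfx
    have hufix : Rmap z t q (Rmap z t q w₂) = w₂ := hfix2w2
    have h2 : Rmap2 z t q (Rmap z t q w₂) = Rmap z t q w₂ := by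
      show Rmap z t q (Rmap z t q (Rmap z t q w₂)) = Rmap z t q w₂
      rw [hufix]
    rcases hclass _ h2 with h | h | h
    · rw [h] at hufix
      rw [hfx] at hufix
      exact hne12 hufix
    · exact hne12 (hw1w3.trans (huniq w₂ hw20 h).symm)
    · rw [h] at hufix
      rw [hfix3] at hufix
      exact hne12 (hw1w3.trans hufix)
  have hnfix2 : Rmap z t q w₂ ≠ w₂ := by
    intro hfx
    have hw2w3 : w₂ = w₃ := huniq w₂ hw20 hfx
    have hufix : Rmap z t q (Rmap z t q w₁) = w₁ := hfix2w1
    have h2 : Rmap2 z t q (Rmap z t q w₁) = Rmap z t q w₁ := by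
      show Rmap z t q (Rmap z t q (Rmap z t q w₁)) = Rmap z t q w₁
      rw [hufix]
    rcases hclass _ h2 with h | h | h
    · exact hne12 ((huniq w₁ hw10 h).trans hw2w3.symm)
    · rw [h] at hufix
      rw [hfx] at hufix
      exact hne12 hufix.symm
    · rw [h] at hufix
      rw [hfix3] at hufix
      exact hne12 ((hw2w3.trans hufix).symm)
  have hne13 : w₁ ≠ w₃ := by
    intro h
    apply hnfix1
    rw [h]
    exact hfix3
  have hne23 : w₂ ≠ w₃ := by
    intro h
    apply hnfix2
    rw [h]
    exact hfix3
  have hmap12 : Rmap z t q w₁ = w₂ := by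
    have hufix : Rmap z t q (Rmap z t q w₁) = w₁ := hfix2w1
    have h2 : Rmap2 z t q (Rmap z t q w₁) = Rmap z t q w₁ := by
      show Rmap z t q (Rmap z t q (Rmap z t q w₁)) = Rmap z t q w₁
      rw [hufix]
    rcases hclass _ h2 with h | h | h
    · exact absurd h hnfix1
    · exact h
    · exfalso
      rw [h] at hufix
      rw [hfix3] at hufix
      exact hne13 hufix.symm
  have hmap21 : Rmap z t q w₂ = w₁ := by
    rw [← hmap12]
    exact hfix2w1
  ----------------------------------------------------------------
  -- The auxiliary roots r₁ < r₂ of g(w) = N·D − 2(Bt−M)w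
  ----------------------------------------------------------------
  have h2MB : (0:ℝ) < 2 * M * B := by linarith [mul_pos hM0 hB0]
  have hBM4 : (0:ℝ) < 4 * B ^ 2 * M ^ 2 := by
    linarith [mul_pos (pow_pos hB0 2) (pow_pos hM0 2)]
  obtain ⟨r₁, hr1def⟩ : ∃ x : ℝ, x = (B * t - 3 * M - ρ) / (2 * M * B) := ⟨_, rfl⟩
  obtain ⟨r₂, hr2def⟩ : ∃ x : ℝ, x = (B * t - 3 * M + ρ) / (2 * M * B) := ⟨_, rfl⟩
  have hr1c : 2 * M * B * r₁ = B * t - 3 * M - ρ := by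
    rw [hr1def]; field_simp
  have hr2c : 2 * M * B * r₂ = B * t - 3 * M + ρ := by
    rw [hr2def]; field_simp
  have hρlt : ρ < B * t - 3 * M := by
    have hid : (B * t - 3 * M) ^ 2 - ρ ^ 2 = 4 * M * B * t := by
      linear_combination -hrsq
    have h1 : ρ ^ 2 < (B * t - 3 * M) ^ 2 := by
      linarith [mul_pos (mul_pos (mul_pos (by norm_num : (0:ℝ) < 4) hM0) hB0) ht0]
    exact lt_of_pow_lt_pow_left₀ 2 (by linarith) h1
  have hr10 : 0 < r₁ := by
    rw [hr1def]; exact div_pos (by linarith) h2MB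
  have hr20 : 0 < r₂ := by
    rw [hr2def]; exact div_pos (by linarith [hρ0]) h2MB
  have hDr1 : 2 * M * (1 + B * r₁) = B * t - M - ρ := by linear_combination hr1c
  have hDr2 : 2 * M * (1 + B * r₂) = B * t - M + ρ := by linear_combination hr2c
  have hgr1 : (t + M * r₁) * (1 + B * r₁) = 2 * (B * t - M) * r₁ := by
    apply cancel_factor (a := 4 * B ^ 2 * M ^ 2) hBM4.ne'
    linear_combination ((-1) * B * M * ρ + 3 * B * M ^ 2 + (-1) * B ^ 2 * M * t
      + 2 * B ^ 2 * M ^ 2 * r₁) * hr1c + B * M * hrsq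
  have hgr2 : (t + M * r₂) * (1 + B * r₂) = 2 * (B * t - M) * r₂ := by
    apply cancel_factor (a := 4 * B ^ 2 * M ^ 2) hBM4.ne'
    linear_combination (B * M * ρ + 3 * B * M ^ 2 + (-1) * B ^ 2 * M * t
      + 2 * B ^ 2 * M ^ 2 * r₂) * hr2c + B * M * hrsq
  have hkey1 : B * t * (2 * M * (1 + B * r₁)) ^ 4 =
      4 * (B * t - M) ^ 2 * (2 * M * B * r₁) * (K - (B * t - M) * ρ) := by
    rw [hDr1, hr1c, hKdef]
    linear_combination (4 * M ^ 3 + B * t * ρ ^ 2 + 4 * B * M * t * ρ + 3 * B * M ^ 2 * t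
      + (-4) * B ^ 2 * t ^ 2 * ρ + (-10) * B ^ 2 * M * t ^ 2 + 3 * B ^ 3 * t ^ 3) * hrsq
  have hkey2 : B * t * (2 * M * (1 + B * r₂)) ^ 4 =
      4 * (B * t - M) ^ 2 * (2 * M * B * r₂) * (K + (B * t - M) * ρ) := by
    rw [hDr2, hr2c, hKdef]
    linear_combination (4 * M ^ 3 + B * t * ρ ^ 2 + (-4) * B * M * t * ρ + 3 * B * M ^ 2 * t
      + 4 * B ^ 2 * t ^ 2 * ρ + (-10) * B ^ 2 * M * t ^ 2 + 3 * B ^ 3 * t ^ 3) * hrsq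
  ----------------------------------------------------------------
  -- r₁ < w₃ < r₂
  ----------------------------------------------------------------
  have hD1r := hDpos r₁ hr10.le
  have hD2r := hDpos r₂ hr20.le
  have hc2 : (0:ℝ) < 4 * (B * t - M) ^ 2 := by linarith [pow_pos hc0 2]
  have hpos16 : (0:ℝ) < 16 * B * t * M ^ 4 := by
    linarith [mul_pos (mul_pos hB0 ht0) (pow_pos hM0 4)]
  have hlt1 : (1 + B * r₁) ^ 4 < 4 * z * (B * t - M) ^ 2 * r₁ := by
    have hA : (0:ℝ) < 4 * (B * t - M) ^ 2 * (2 * M * B * r₁) :=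
      mul_pos hc2 (mul_pos h2MB hr10)
    have hprod := mul_lt_mul_of_pos_left hz1' hA
    have h16 : 16 * B * t * M ^ 4 * ((1 + B * r₁) ^ 4) <
        16 * B * t * M ^ 4 * (4 * z * (B * t - M) ^ 2 * r₁) := by
      linarith [hkey1, hprod]
    exact lt_of_mul_lt_mul_left h16 hpos16.le
  have hlt2 : 4 * z * (B * t - M) ^ 2 * r₂ < (1 + B * r₂) ^ 4 := by
    have hA : (0:ℝ) < 4 * (B * t - M) ^ 2 * (2 * M * B * r₂) :=
      mul_pos hc2 (mul_pos h2MB hr20)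
    have hprod := mul_lt_mul_of_pos_left hz2' hA
    have h16 : 16 * B * t * M ^ 4 * (4 * z * (B * t - M) ^ 2 * r₂) <
        16 * B * t * M ^ 4 * ((1 + B * r₂) ^ 4) := by
      linarith [hkey2, hprod]
    exact lt_of_mul_lt_mul_left h16 hpos16.le
  have hRr1 : r₁ < Rmap z t q r₁ := by
    rw [hRd r₁]
    have key : r₁ * (1 + B * r₁) ^ 2 < z * (t + M * r₁) ^ 2 := by
      have h1 : r₁ * (1 + B * r₁) ^ 2 * (1 + B * r₁) ^ 2 <
          z * (t + M * r₁) ^ 2 * (1 + B * r₁) ^ 2 := by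
        calc r₁ * (1 + B * r₁) ^ 2 * (1 + B * r₁) ^ 2 = r₁ * (1 + B * r₁) ^ 4 := by ring
        _ < r₁ * (4 * z * (B * t - M) ^ 2 * r₁) := mul_lt_mul_of_pos_left hlt1 hr10
        _ = z * ((t + M * r₁) * (1 + B * r₁)) ^ 2 := by rw [hgr1]; ring
        _ = z * (t + M * r₁) ^ 2 * (1 + B * r₁) ^ 2 := by ring
      exact lt_of_mul_lt_mul_right h1 (sq_nonneg _)
    have h2 : z * ((t + M * r₁) / (1 + B * r₁)) ^ 2
        = z * (t + M * r₁) ^ 2 / (1 + B * r₁) ^ 2 := by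
      rw [div_pow, mul_div_assoc]
    rw [h2, lt_div_iff₀ (pow_pos hD1r 2)]
    linarith
  have hRr2 : Rmap z t q r₂ < r₂ := by
    rw [hRd r₂]
    have key : z * (t + M * r₂) ^ 2 < r₂ * (1 + B * r₂) ^ 2 := by
      have h1 : z * (t + M * r₂) ^ 2 * (1 + B * r₂) ^ 2 <
          r₂ * (1 + B * r₂) ^ 2 * (1 + B * r₂) ^ 2 := by
        calc z * (t + M * r₂) ^ 2 * (1 + B * r₂) ^ 2
            = z * ((t + M * r₂) * (1 + B * r₂)) ^ 2 := by ring
        _ = r₂ * (4 * z * (B * t - M) ^ 2 * r₂) := by rw [hgr2]; ring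
        _ < r₂ * (1 + B * r₂) ^ 4 := mul_lt_mul_of_pos_left hlt2 hr20
        _ = r₂ * (1 + B * r₂) ^ 2 * (1 + B * r₂) ^ 2 := by ring
      exact lt_of_mul_lt_mul_right h1 (sq_nonneg _)
    have h2 : z * ((t + M * r₂) / (1 + B * r₂)) ^ 2
        = z * (t + M * r₂) ^ 2 / (1 + B * r₂) ^ 2 := by
      rw [div_pow, mul_div_assoc]
    rw [h2, div_lt_iff₀ (pow_pos hD2r 2)]
    linarith
  have hr1w3 : r₁ < w₃ := by
    by_contra hcon
    push_neg at hcon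
    rcases eq_or_lt_of_le hcon with he | hlt
    · rw [← he] at hRr1
      rw [hfix3] at hRr1
      exact lt_irrefl _ hRr1
    · have h := hanti w₃ r₁ hw30.le hlt
      rw [hfix3] at h
      linarith
  have hw3r2 : w₃ < r₂ := by
    by_contra hcon
    push_neg at hcon
    rcases eq_or_lt_of_le hcon with he | hlt
    · rw [he] at hRr2
      rw [hfix3] at hRr2
      exact lt_irrefl _ hRr2
    · have h := hanti r₂ w₃ hr20.le hlt
      rw [hfix3] at h
      linarith
  ----------------------------------------------------------------
  -- Repelling multiplier at w₃
  ----------------------------------------------------------------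
  have hgw3 : (t + M * w₃) * (1 + B * w₃) < 2 * (B * t - M) * w₃ := by
    have hgfact : 4 * M * B * ((t + M * w₃) * (1 + B * w₃) - 2 * (B * t - M) * w₃) =
        (2 * M * B * w₃ - (B * t - 3 * M - ρ)) * (2 * M * B * w₃ - (B * t - 3 * M + ρ)) := by
      linear_combination hrsq
    have h1 : 0 < 2 * M * B * w₃ - (B * t - 3 * M - ρ) := by
      linarith [mul_lt_mul_of_pos_left hr1w3 h2MB, hr1c]
    have h2 : 2 * M * B * w₃ - (B * t - 3 * M + ρ) < 0 := by
      linarith [mul_lt_mul_of_pos_left hw3r2 h2MB, hr2c]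
    have hRHS := mul_neg_of_pos_of_neg h1 h2
    by_contra hcon
    push_neg at hcon
    have h4 : 0 ≤ 4 * M * B * ((t + M * w₃) * (1 + B * w₃) - 2 * (B * t - M) * w₃) :=
      mul_nonneg (by linarith) (by linarith)
    linarith [hgfact]
  have hD3 := hDpos w₃ hw30.le
  have hN3 := hNpos w₃ hw30.le
  have hzN3 : z * (t + M * w₃) ^ 2 = w₃ * (1 + B * w₃) ^ 2 := by
    have h := hfix3
    rw [hRd w₃, div_pow, ← mul_div_assoc, div_eq_iff (pow_ne_zero 2 hD3.ne')] at h
    linarith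
  have hder3 := (rmap_hasDerivAt z t q B M hBdef hMdef w₃ hD3.ne').deriv
  have habs3 : 1 < |deriv (Rmap z t q) w₃| := by
    rw [hder3]
    have hneg : 2 * z * (M - B * t) * (t + M * w₃) / (1 + B * w₃) ^ 3 < 0 := by
      apply div_neg_of_neg_of_pos _ (pow_pos hD3 3)
      linarith [mul_pos (mul_pos hz0 hN3) hc0]
    rw [abs_of_neg hneg]
    have hrewr : -(2 * z * (M - B * t) * (t + M * w₃) / (1 + B * w₃) ^ 3) =
        2 * z * (B * t - M) * (t + M * w₃) / (1 + B * w₃) ^ 3 := by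
      ring
    rw [hrewr, lt_div_iff₀ (pow_pos hD3 3)]
    have h2 := mul_lt_mul_of_pos_right hgw3 (pow_pos hD3 2)
    have h3 : 2 * (B * t - M) * (z * (t + M * w₃) ^ 2) =
        2 * (B * t - M) * (w₃ * (1 + B * w₃) ^ 2) := by rw [hzN3]
    have h1 : (t + M * w₃) * ((1 + B * w₃) ^ 3) <
        (t + M * w₃) * (2 * z * (B * t - M) * (t + M * w₃)) := by
      linarith [h2, h3]
    linarith [lt_of_mul_lt_mul_left h1 hN3.le]
  ----------------------------------------------------------------
  -- Attracting multiplier of the two-cycle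
  ----------------------------------------------------------------
  have hD1p := hDpos w₁ hw10.le
  have hD2p := hDpos w₂ hw20.le
  have hN1p := hNpos w₁ hw10.le
  have hN2p := hNpos w₂ hw20.le
  have hsumc : P ^ 2 * (w₁ + w₂) = z * (B * t - M) ^ 2 - 2 * P * Qq := by
    linear_combination (1/2 : ℝ) * hw1c + (1/2 : ℝ) * hw2c
  have hprodc : P ^ 2 * (w₁ * w₂) = Qq ^ 2 := by
    apply cancel_factor (a := 4 * P ^ 2) (by linarith [pow_pos hP0 2] : (0:ℝ) < 4 * P ^ 2).ne'
    linear_combination (2 * P ^ 2 * w₂) * hw1c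
      + (z * (B * t - M) ^ 2 - 2 * P * Qq - δ) * hw2c - hdsq
  have htPQ : t * P - M * Qq = B * t - M := by rw [hPdef, hQdef]; ring
  have hPBQ : P - B * Qq = z * M * (M - B * t) := by rw [hPdef, hQdef]; ring
  have hN12 : (t + M * w₁) * (t + M * w₂) * P ^ 2 = (B * t - M) ^ 2 * Qq := by
    linear_combination (M * t) * hsumc + M ^ 2 * hprodc
      + (t * P - M * Qq + (B * t - M)) * htPQ + (-(B * t - M) ^ 2) * hQdef
  have hD12 : (1 + B * w₁) * (1 + B * w₂) * P ^ 2 = z * (B * t - M) ^ 2 * P := by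
    linear_combination B * hsumc + B ^ 2 * hprodc
      + (P - B * Qq + z * M * (M - B * t)) * hPBQ + (-(z * (B * t - M) ^ 2)) * hPdef
  have hu : (1 + B * w₁) * (1 + B * w₂) * P = z * (B * t - M) ^ 2 := by
    apply cancel_factor (a := P) hPne
    linear_combination hD12
  have hda := rmap_hasDerivAt z t q B M hBdef hMdef w₁ hD1p.ne'
  have hdb := rmap_hasDerivAt z t q B M hBdef hMdef w₂ hD2p.ne'
  have hdb' : HasDerivAt (Rmap z t q) (2 * z * (M - B * t) * (t + M * w₂) / (1 + B * w₂) ^ 3)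
      (Rmap z t q w₁) := by
    rw [hmap12]
    exact hdb
  have hcomp : HasDerivAt (Rmap2 z t q)
      ((2 * z * (M - B * t) * (t + M * w₂) / (1 + B * w₂) ^ 3) *
        (2 * z * (M - B * t) * (t + M * w₁) / (1 + B * w₁) ^ 3)) w₁ := by
    have hfun : Rmap2 z t q = (Rmap z t q) ∘ (Rmap z t q) := rfl
    rw [hfun]
    exact hdb'.comp w₁ hda
  have habs1 : |deriv (Rmap2 z t q) w₁| < 1 := by
    rw [hcomp.deriv]
    have hf1 : 2 * z * (M - B * t) * (t + M * w₂) / (1 + B * w₂) ^ 3 < 0 := by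
      apply div_neg_of_neg_of_pos _ (pow_pos hD2p 3)
      linarith [mul_pos (mul_pos hz0 hN2p) hc0]
    have hf2 : 2 * z * (M - B * t) * (t + M * w₁) / (1 + B * w₁) ^ 3 < 0 := by
      apply div_neg_of_neg_of_pos _ (pow_pos hD1p 3)
      linarith [mul_pos (mul_pos hz0 hN1p) hc0]
    have hpos : 0 < (2 * z * (M - B * t) * (t + M * w₂) / (1 + B * w₂) ^ 3) *
        (2 * z * (M - B * t) * (t + M * w₁) / (1 + B * w₁) ^ 3) :=
      mul_pos_of_neg_of_neg hf1 hf2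
    rw [abs_of_pos hpos]
    have hdd : (2 * z * (M - B * t) * (t + M * w₂) / (1 + B * w₂) ^ 3) *
        (2 * z * (M - B * t) * (t + M * w₁) / (1 + B * w₁) ^ 3) =
        4 * z ^ 2 * (B * t - M) ^ 2 * ((t + M * w₁) * (t + M * w₂)) /
          ((1 + B * w₁) * (1 + B * w₂)) ^ 3 := by
      rw [div_mul_div_comm]
      congr 1
      · ring
      · ring
    rw [hdd]
    have hu30 : 0 < ((1 + B * w₁) * (1 + B * w₂)) ^ 3 :=
      pow_pos (mul_pos hD1p hD2p) 3
    rw [div_lt_one hu30]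
    have hgoal' : 4 * z ^ 2 * (B * t - M) ^ 2 * ((t + M * w₁) * (t + M * w₂)) * P ^ 3 <
        ((1 + B * w₁) * (1 + B * w₂)) ^ 3 * P ^ 3 := by
      have e1 : 4 * z ^ 2 * (B * t - M) ^ 2 * ((t + M * w₁) * (t + M * w₂)) * P ^ 3 =
          4 * z ^ 2 * (B * t - M) ^ 2 * P * ((t + M * w₁) * (t + M * w₂) * P ^ 2) := by
        ring
      have e2 : ((1 + B * w₁) * (1 + B * w₂)) ^ 3 * P ^ 3 =
          ((1 + B * w₁) * (1 + B * w₂) * P) ^ 3 := by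
        ring
      rw [e1, e2, hN12, hu]
      have hposc : (0:ℝ) < z ^ 2 * (B * t - M) ^ 4 :=
        mul_pos (pow_pos hz0 2) (pow_pos hc0 4)
      linarith [mul_lt_mul_of_pos_left hE hposc]
    exact (mul_lt_mul_iff_of_pos_right (pow_pos hP0 3)).mp hgoal'
  exact ⟨w₁, w₂, w₃, hw10, hw20, hw30, hne12, hne13, hne23, hfix2w1, hfix2w2, hfix2w3,
    hclass, hfix3, habs3, hmap12, hmap21, habs1⟩
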